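/- Let G = ⟨g⟩ be a cyclic group of order pⁿ and F_q a finite field such that the class of q generates the unit group U(Z_{pⁿ}). Then the idempotents e₀ = Ĝ and e_i = Ĝ_i − Ĝ_{i−1} (1 ≤ i ≤ n), where G_i = ⟨g^{p^i}⟩, form a complete set of primitive idempotents of F_q G. -/

import Mathlib

open scoped Classical

/-- `hat F H` is the element `Ĥ = (1/|H|) ∑_{h ∈ H} h` of the group algebra `F G`. -/
noncomputable def hat (F : Type) [Field F] {G : Type} [Group G] [Fintype G]
    (H : Subgroup G) : MonoidAlgebra F G :=
  (Nat.card H : F)⁻¹ • ∑ h ∈ (H : Set G).toFinset, MonoidAlgebra.single h (1 : F)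

/-- `e` is a primitive idempotent: a nonzero idempotent which is not the sum of two
nonzero orthogonal idempotents. -/
def IsPrimIdem {R : Type} [Ring R] (e : R) : Prop :=
  e ≠ 0 ∧ e * e = e ∧
    ∀ a b : R, a * a = a → b * b = b → a * b = 0 → b * a = 0 → e = a + b →
      a = 0 ∨ b = 0

section Aux

set_option linter.unusedSectionVars false

variable {F : Type} [Field F] {G : Type} [Group G] [Fintype G]

lemma hat_apply (H : Subgroup G) (x : G) :
    (hat F H).coeff x = (Nat.card H : F)⁻¹ * (if x ∈ H then 1 else 0) := by
  unfold hat
  rw [MonoidAlgebra.coeff_smul, Finsupp.smul_apply, MonoidAlgebra.coeff_sum, Finsupp.finset_sum_apply]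
  simp only [MonoidAlgebra.coeff_single, Finsupp.single_apply, Finset.sum_ite_eq', Set.mem_toFinset, SetLike.mem_coe,
    smul_eq_mul]

lemma sum_mul_single (H : Subgroup G) {x : G} (hx : x ∈ H) :
    (∑ h ∈ (H : Set G).toFinset, MonoidAlgebra.single h (1:F)) * MonoidAlgebra.single x 1
      = ∑ h ∈ (H : Set G).toFinset, MonoidAlgebra.single h (1:F) := by
  rw [Finset.sum_mul]
  simp only [MonoidAlgebra.single_mul_single, mul_one]
  refine Finset.sum_equiv (Equiv.mulRight x) (fun h => ?_) (fun h _ => rfl)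
  simp only [Set.mem_toFinset, SetLike.mem_coe, Equiv.coe_mulRight]
  exact ⟨fun hh => H.mul_mem hh hx, fun hh => by simpa using H.mul_mem hh (H.inv_mem hx)⟩

lemma single_mul_sum (H : Subgroup G) {x : G} (hx : x ∈ H) :
    MonoidAlgebra.single x 1 * (∑ h ∈ (H : Set G).toFinset, MonoidAlgebra.single h (1:F))
      = ∑ h ∈ (H : Set G).toFinset, MonoidAlgebra.single h (1:F) := by
  rw [Finset.mul_sum]
  simp only [MonoidAlgebra.single_mul_single, one_mul]
  refine Finset.sum_equiv (Equiv.mulLeft x) (fun h => ?_) (fun h _ => rfl)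
  simp only [Set.mem_toFinset, SetLike.mem_coe, Equiv.coe_mulLeft]
  exact ⟨fun hh => H.mul_mem hx hh, fun hh => by simpa using H.mul_mem (H.inv_mem hx) hh⟩

lemma card_toFinset_subgroup (K : Subgroup G) :
    ((K : Set G).toFinset.card : F) = (Nat.card K : F) := by
  congr 1
  rw [Set.toFinset_card, Nat.card_eq_fintype_card]
  exact Fintype.card_congr (Equiv.refl _)

lemma hat_mul_hat (H K : Subgroup G) (hKH : K ≤ H) (hK : (Nat.card K : F) ≠ 0) :
    hat F H * hat F K = hat F H := by
  unfold hat
  rw [smul_mul_smul_comm, Finset.mul_sum]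
  have : ∀ k ∈ (K : Set G).toFinset,
      (∑ h ∈ (H : Set G).toFinset, MonoidAlgebra.single h (1:F)) * MonoidAlgebra.single k 1
        = ∑ h ∈ (H : Set G).toFinset, MonoidAlgebra.single h (1:F) := by
    intro k hk
    exact sum_mul_single H (hKH (Set.mem_toFinset.mp hk))
  rw [Finset.sum_congr rfl this, Finset.sum_const, ← Nat.cast_smul_eq_nsmul F, smul_smul,
    card_toFinset_subgroup]
  rw [mul_assoc, inv_mul_cancel₀ hK, mul_one]

lemma hat_mul_hat' (H K : Subgroup G) (hKH : K ≤ H) (hK : (Nat.card K : F) ≠ 0) :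
    hat F K * hat F H = hat F H := by
  unfold hat
  rw [smul_mul_smul_comm, Finset.sum_mul]
  have : ∀ k ∈ (K : Set G).toFinset,
      MonoidAlgebra.single k 1 * (∑ h ∈ (H : Set G).toFinset, MonoidAlgebra.single h (1:F))
        = ∑ h ∈ (H : Set G).toFinset, MonoidAlgebra.single h (1:F) := by
    intro k hk
    exact single_mul_sum H (hKH (Set.mem_toFinset.mp hk))
  rw [Finset.sum_congr rfl this, Finset.sum_const, ← Nat.cast_smul_eq_nsmul F, smul_smul,
    card_toFinset_subgroup]
  rw [mul_comm ((Nat.card K : F))⁻¹, mul_assoc, inv_mul_cancel₀ hK, mul_one]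

lemma hat_bot : hat F (⊥ : Subgroup G) = 1 := by
  unfold hat
  simp [MonoidAlgebra.one_def]

lemma mul_comm'' (hcomm : ∀ x y : G, x * y = y * x) (a b : MonoidAlgebra F G) :
    a * b = b * a := by
  letI : CommGroup G := { mul_comm := hcomm }
  exact mul_comm a b

lemma charP_monoidAlgebra (ℓ : ℕ) [CharP F ℓ] : CharP (MonoidAlgebra F G) ℓ := by
  constructor
  intro x
  rw [MonoidAlgebra.natCast_def, MonoidAlgebra.single_eq_zero]
  exact CharP.cast_eq_zero_iff F ℓ x

lemma pow_card_eq_mapDomain [Fintype F] (hcomm : ∀ x y : G, x * y = y * x) (ℓ m : ℕ)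
    [Fact ℓ.Prime] [CharP F ℓ] (hq : Fintype.card F = ℓ ^ m) (a : MonoidAlgebra F G) :
    a ^ Fintype.card F = MonoidAlgebra.mapDomain (· ^ Fintype.card F) a := by
  haveI := charP_monoidAlgebra (F := F) (G := G) ℓ
  induction a using MonoidAlgebra.induction_linear with
  | zero => rw [MonoidAlgebra.mapDomain_zero]; exact zero_pow Fintype.card_ne_zero
  | add f g hf hg =>
      rw [MonoidAlgebra.mapDomain_add, ← hf, ← hg, hq]
      exact add_pow_char_pow_of_commute ℓ m (mul_comm'' hcomm f g)
  | single x c =>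
      rw [MonoidAlgebra.mapDomain_single]
      show MonoidAlgebra.single x c ^ _ = MonoidAlgebra.single _ c
      rw [MonoidAlgebra.single_pow, FiniteField.pow_card]

end Aux

theorem stmt6 (p n : ℕ) (hp : p.Prime) (hn : 1 ≤ n)
    (F : Type) [Field F] [Fintype F]
    (G : Type) [Group G] [Fintype G] (g : G)
    (hgen : ∀ x : G, x ∈ Subgroup.zpowers g) (hcard : Fintype.card G = p ^ n)
    -- the class of `q = |F|` generates the unit group `U(ℤ_{pⁿ})`
    (hu : IsUnit ((Fintype.card F : ZMod (p ^ n))))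
    (hgenU : ∀ v : (ZMod (p ^ n))ˣ, v ∈ Subgroup.zpowers hu.unit)
    (e : ℕ → MonoidAlgebra F G)
    (he0 : e 0 = hat F (⊤ : Subgroup G))
    (hei : ∀ i, 1 ≤ i → i ≤ n →
      e i = hat F (Subgroup.zpowers (g ^ p ^ i)) - hat F (Subgroup.zpowers (g ^ p ^ (i - 1)))) :
    (∀ i ≤ n, IsPrimIdem (e i)) ∧
    (∀ i ≤ n, ∀ j ≤ n, i ≠ j → e i * e j = 0) ∧
    (∑ i ∈ Finset.range (n + 1), e i = 1) := by
  classical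
  have hp1 : 1 < p := hp.one_lt
  have hpn1 : 1 < p ^ n := Nat.one_lt_pow (by omega) hp1
  haveI : NeZero (p ^ n) := ⟨by positivity⟩
  have horder : orderOf g = p ^ n := by
    rw [orderOf_eq_card_of_forall_mem_zpowers hgen, Nat.card_eq_fintype_card, hcard]
  have hcop : Nat.Coprime (Fintype.card F) (p ^ n) :=
    (ZMod.isUnit_iff_coprime (Fintype.card F) (p ^ n)).mp hu
  -- characteristic facts
  haveI hchar : CharP F (ringChar F) := ringChar.charP F
  obtain ⟨mℓ, hℓprime, hqm⟩ := FiniteField.card F (ringChar F)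
  haveI : Fact (ringChar F).Prime := ⟨hℓprime⟩
  have hℓp : ringChar F ≠ p := by
    intro h
    have hdq : p ∣ Fintype.card F := by
      rw [hqm, ← h]
      exact dvd_pow_self _ (by exact_mod_cast mℓ.ne_zero)
    have hdpn : p ∣ p ^ n := dvd_pow_self _ (by omega)
    have h3 := Nat.dvd_gcd hdq hdpn
    rw [Nat.Coprime.gcd_eq_one hcop] at h3
    have := Nat.dvd_one.mp h3
    omega
  have hpF : (p : F) ≠ 0 := by
    rw [Ne, CharP.cast_eq_zero_iff F (ringChar F) p]
    intro hdvd
    rcases (Nat.Prime.eq_one_or_self_of_dvd hp _ hdvd) with h | h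
    · exact hℓprime.one_lt.ne' h
    · exact hℓp h
  have hpowF : ∀ k : ℕ, ((p ^ k : ℕ) : F) ≠ 0 := fun k => by
    push_cast; exact pow_ne_zero k hpF
  -- commutativity of G
  have hcomm : ∀ x y : G, x * y = y * x := by
    intro x y
    obtain ⟨a, rfl⟩ := Subgroup.mem_zpowers_iff.mp (hgen x)
    obtain ⟨b, rfl⟩ := Subgroup.mem_zpowers_iff.mp (hgen y)
    exact zpow_mul_comm g a b
  -- the chain of subgroups
  let HH : ℕ → Subgroup G := fun i => Subgroup.zpowers (g ^ p ^ i)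
  have hei' : ∀ i, 1 ≤ i → i ≤ n → e i = hat F (HH i) - hat F (HH (i - 1)) := hei
  have hordH : ∀ i, i ≤ n → orderOf (g ^ p ^ i) = p ^ (n - i) := by
    intro i hi
    rw [orderOf_pow' g (pow_ne_zero i (by omega : p ≠ 0)), horder,
      Nat.gcd_eq_right (pow_dvd_pow p hi), Nat.pow_div hi (by omega)]
  have hcardH : ∀ i, i ≤ n → Nat.card (HH i) = p ^ (n - i) := fun i hi => by
    rw [Nat.card_zpowers]; exact hordH i hi
  have hcardHF : ∀ i, i ≤ n → ((Nat.card (HH i) : F)) ≠ 0 := fun i hi => by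
    rw [hcardH i hi]; exact hpowF _
  have hmono : ∀ i j, i ≤ j → HH j ≤ HH i := by
    intro i j hij
    have hexp : i + (j - i) = j := by omega
    have hgj : g ^ p ^ j = (g ^ p ^ i) ^ p ^ (j - i) := by
      rw [← pow_mul, ← pow_add, hexp]
    refine Subgroup.zpowers_le.mpr ?_
    rw [hgj]
    exact Subgroup.pow_mem _ (Subgroup.mem_zpowers _) _
  have hH0 : HH 0 = ⊤ := by
    rw [Subgroup.eq_top_iff']
    intro x
    show x ∈ Subgroup.zpowers (g ^ p ^ 0)
    simpa using hgen x
  have hgpn : g ^ p ^ n = 1 := by rw [← horder]; exact pow_orderOf_eq_one g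
  have hHn : HH n = ⊥ := by
    show Subgroup.zpowers (g ^ p ^ n) = ⊥
    rw [hgpn]
    exact Subgroup.zpowers_one_eq_bot
  have he0' : e 0 = hat F (HH 0) := by rw [he0, ← hH0]
  have hmem : ∀ i, i ≤ n → ∀ j, j ≤ n → (g ^ p ^ i ∈ HH j ↔ j ≤ i) := by
    intro i hi j hj
    constructor
    · intro hm
      have h1 : orderOf (g ^ p ^ i) ∣ Nat.card (HH j) := Subgroup.orderOf_dvd_natCard _ hm
      rw [hordH i hi, hcardH j hj] at h1
      have := (Nat.pow_dvd_pow_iff_le_right hp1).mp h1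
      omega
    · intro hji
      exact hmono j i hji (Subgroup.mem_zpowers _)
  -- products of hats
  have hathat : ∀ i, i ≤ n → ∀ j, j ≤ n →
      hat F (HH i) * hat F (HH j) = hat F (HH (min i j)) := by
    intro i hi j hj
    rcases le_total j i with h | h
    · rw [min_eq_right h]
      exact hat_mul_hat' (HH j) (HH i) (hmono j i h) (hcardHF i hi)
    · rw [min_eq_left h]
      exact hat_mul_hat (HH i) (HH j) (hmono i j h) (hcardHF j hj)
  -- products of the e's
  have hee : ∀ i, i ≤ n → ∀ j, j ≤ n → e i * e j = if i = j then e i else 0 := by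
    intro i hi j hj
    rcases Nat.eq_zero_or_pos i with rfl | hipos
    · rcases Nat.eq_zero_or_pos j with rfl | hjpos
      · rw [if_pos rfl, he0', hathat 0 (by omega) 0 (by omega), min_self]
      · rw [if_neg (by omega), he0', hei' j hjpos hj, mul_sub,
          hathat 0 (by omega) j hj, hathat 0 (by omega) (j-1) (by omega),
          Nat.min_eq_left (by omega), Nat.min_eq_left (by omega), sub_self]
    · rcases Nat.eq_zero_or_pos j with rfl | hjpos
      · rw [if_neg (by omega), he0', hei' i hipos hi, sub_mul,
          hathat i hi 0 (by omega), hathat (i-1) (by omega) 0 (by omega),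
          Nat.min_eq_right (by omega), Nat.min_eq_right (by omega), sub_self]
      · rw [hei' i hipos hi, hei' j hjpos hj, sub_mul, mul_sub, mul_sub,
          hathat i hi j hj, hathat i hi (j-1) (by omega),
          hathat (i-1) (by omega) j hj, hathat (i-1) (by omega) (j-1) (by omega)]
        rcases Nat.lt_trichotomy i j with hlt | heq | hgt
        · rw [if_neg (by omega), Nat.min_eq_left (by omega), Nat.min_eq_left (by omega),
            Nat.min_eq_left (by omega), Nat.min_eq_left (by omega)]
          abel
        · subst heq
          rw [if_pos rfl, min_self, Nat.min_eq_right (by omega), Nat.min_eq_left (by omega),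
            min_self]
          abel
        · rw [if_neg (by omega), Nat.min_eq_right (by omega), Nat.min_eq_right (by omega),
            Nat.min_eq_right (by omega), Nat.min_eq_right (by omega)]
          abel
  -- partial sums
  have hsum' : ∀ m, m ≤ n → ∑ i ∈ Finset.range (m + 1), e i = hat F (HH m) := by
    intro m
    induction m with
    | zero => intro _; rw [Finset.sum_range_one, he0']
    | succ k ih =>
        intro hm
        rw [Finset.sum_range_succ, ih (by omega), hei' (k+1) (by omega) hm,
          Nat.add_sub_cancel]
        abel
  -- nonvanishing
  have hene : ∀ i, i ≤ n → e i ≠ 0 := by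
    intro i hi h0
    rcases Nat.eq_zero_or_pos i with rfl | hipos
    · have h1 : (e 0).coeff 1 = (Nat.card (HH 0) : F)⁻¹ := by
        rw [he0', hat_apply, if_pos (Subgroup.one_mem _), mul_one]
      rw [h0] at h1
      simp only [MonoidAlgebra.coeff_zero, Finsupp.coe_zero, Pi.zero_apply] at h1
      exact inv_ne_zero (hcardHF 0 (by omega)) h1.symm
    · have hyi : g ^ p ^ (i-1) ∉ HH i := by
        rw [hmem (i-1) (by omega) i hi]
        omega
      have h1 : (e i).coeff (g ^ p ^ (i-1)) = -(Nat.card (HH (i-1)) : F)⁻¹ := by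
        rw [hei' i hipos hi, MonoidAlgebra.coeff_sub, Finsupp.sub_apply, hat_apply, hat_apply,
          if_neg hyi, if_pos (Subgroup.mem_zpowers _), mul_zero, mul_one, zero_sub]
      rw [h0] at h1
      simp only [MonoidAlgebra.coeff_zero, Finsupp.coe_zero, Pi.zero_apply] at h1
      exact inv_ne_zero (hcardHF (i-1) (by omega)) (neg_eq_zero.mp h1.symm)
  -- exponent inverse mod p^n
  obtain ⟨q', -, hqq'⟩ := Nat.exists_mul_mod_eq_one_of_coprime hcop hpn1
  have hmodqq' : Fintype.card F * q' ≡ 1 [MOD p ^ n] := by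
    unfold Nat.ModEq
    rw [hqq', Nat.mod_eq_of_lt hpn1]
  have hxqq' : ∀ x : G, (x ^ Fintype.card F) ^ q' = x := by
    intro x
    rw [← pow_mul]
    conv_rhs => rw [← pow_one x]
    rw [pow_eq_pow_iff_modEq]
    exact (hmodqq'.of_dvd (hcard ▸ orderOf_dvd_card))
  have hqmemiff : ∀ (K : Subgroup G) (x : G), x ^ Fintype.card F ∈ K ↔ x ∈ K := by
    intro K x
    exact ⟨fun h => by simpa [hxqq' x] using K.pow_mem h q', fun h => K.pow_mem h _⟩
  have hqkmem : ∀ (K : Subgroup G) (x : G) (k : ℕ), x ^ (Fintype.card F) ^ k ∈ K ↔ x ∈ K := by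
    intro K x k
    induction k with
    | zero => simp
    | succ t iht => rw [pow_succ, pow_mul, hqmemiff, iht]
  have hqinj : Function.Injective (fun x : G => x ^ Fintype.card F) := by
    intro x y h
    have := congrArg (· ^ q') h
    simpa [hxqq'] using this
  -- idempotents are fixed by the q-power map on coefficients
  have hidem_inv : ∀ a : MonoidAlgebra F G, a * a = a →
      ∀ x : G, a.coeff (x ^ Fintype.card F) = a.coeff x := by
    intro a ha x
    have hpow : ∀ k : ℕ, 1 ≤ k → a ^ k = a := by
      intro k hk
      induction k with
      | zero => omega
      | succ t iht =>
          rcases Nat.eq_zero_or_pos t with rfl | ht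
          · simpa using pow_one a
          · rw [pow_succ, iht ht, ha]
    have hmap : MonoidAlgebra.mapDomain (· ^ Fintype.card F) a = a := by
      rw [← pow_card_eq_mapDomain hcomm (ringChar F) mℓ hqm a]
      exact hpow _ Fintype.card_pos
    conv_lhs => rw [← hmap]
    exact Finsupp.mapDomain_apply hqinj a.coeff x
  have hinv_iter : ∀ a : MonoidAlgebra F G, (∀ x, a.coeff (x ^ Fintype.card F) = a.coeff x) →
      ∀ (x : G) (k : ℕ), a.coeff (x ^ (Fintype.card F) ^ k) = a.coeff x := by
    intro a hinv x k
    induction k with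
    | zero => simp
    | succ t iht => rw [pow_succ, pow_mul, hinv, iht]
  -- orbit representatives
  have hrep : ∀ x : G, ∃ j, j ≤ n ∧ ∃ k : ℕ, x = (g ^ p ^ j) ^ (Fintype.card F) ^ k := by
    intro x
    obtain ⟨t, ht⟩ := (Submonoid.mem_powers_iff x g).mp (mem_powers_iff_mem_zpowers.mpr (hgen x))
    have hxt' : g ^ (t % p ^ n) = x := by
      rw [← horder, pow_mod_orderOf, ht]
    have ht'lt : t % p ^ n < p ^ n := Nat.mod_lt _ (by positivity)
    rcases Nat.eq_zero_or_pos (t % p ^ n) with h0 | hpos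
    · refine ⟨n, le_rfl, 0, ?_⟩
      rw [pow_zero, pow_one, hgpn, ← hxt', h0, pow_zero]
    · set t' := t % p ^ n with ht'def
      set j := t'.factorization p with hjdef
      have hdvd : p ^ j ∣ t' := Nat.ordProj_dvd t' p
      set u := t' / p ^ j with hudef
      have htu : p ^ j * u = t' := Nat.mul_div_cancel' hdvd
      have hu0 : u ≠ 0 := by intro h; rw [h, mul_zero] at htu; omega
      have hpu : ¬ p ∣ u := Nat.not_dvd_ordCompl hp (by omega)
      have hjn : j < n := by
        have h1 : p ^ j ≤ t' := Nat.le_of_dvd hpos hdvd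
        exact (Nat.pow_lt_pow_iff_right hp1).mp (lt_of_le_of_lt h1 ht'lt)
      have hucop : Nat.Coprime u (p ^ n) :=
        Nat.Coprime.pow_right n (((Nat.Prime.coprime_iff_not_dvd hp).mpr hpu).symm)
      have huunit : IsUnit ((u : ZMod (p ^ n))) := (ZMod.isUnit_iff_coprime u (p ^ n)).mpr hucop
      obtain ⟨k, hk⟩ := (Submonoid.mem_powers_iff huunit.unit hu.unit).mp
        (mem_powers_iff_mem_zpowers.mpr (hgenU huunit.unit))
      have hkz : ((Fintype.card F ^ k : ℕ) : ZMod (p ^ n)) = (u : ZMod (p ^ n)) := by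
        have h2 := congrArg (Units.val) hk
        rw [Units.val_pow_eq_pow_val, IsUnit.unit_spec, IsUnit.unit_spec] at h2
        push_cast
        exact h2
      have hmodn : Fintype.card F ^ k ≡ u [MOD p ^ n] :=
        (ZMod.natCast_eq_natCast_iff _ _ _).mp hkz
      have hmodnj : Fintype.card F ^ k ≡ u [MOD p ^ (n - j)] :=
        hmodn.of_dvd (pow_dvd_pow p (by omega))
      refine ⟨j, by omega, k, ?_⟩
      have heq : (g ^ p ^ j) ^ (Fintype.card F) ^ k = (g ^ p ^ j) ^ u := by
        rw [pow_eq_pow_iff_modEq, hordH j (by omega)]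
        exact hmodnj
      rw [heq, ← pow_mul, htu, hxt']
  -- spanning: every idempotent is a combination of the hats
  have hspan : ∀ a : MonoidAlgebra F G, a * a = a →
      ∃ c : ℕ → F, a = ∑ j ∈ Finset.range (n + 1), c j • hat F (HH j) := by
    intro a ha
    have hinv := hidem_inv a ha
    refine ⟨fun j => (Nat.card (HH j) : F) *
      (a.coeff (g ^ p ^ j) - if j = 0 then 0 else a.coeff (g ^ p ^ (j - 1))), ?_⟩
    have htel : ∀ s : ℕ, ∑ j ∈ Finset.range (s + 1),
        (a.coeff (g ^ p ^ j) - if j = 0 then (0:F) else a.coeff (g ^ p ^ (j - 1))) = a.coeff (g ^ p ^ s) := by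
      intro s
      induction s with
      | zero => simp
      | succ t iht =>
          rw [Finset.sum_range_succ, iht, if_neg (by omega), Nat.add_sub_cancel]
          ring
    refine MonoidAlgebra.coeff_injective (Finsupp.ext ?_)
    intro x
    obtain ⟨j₀, hj₀, k, rfl⟩ := hrep x
    rw [hinv_iter a hinv _ k, MonoidAlgebra.coeff_sum, Finsupp.finset_sum_apply]
    have hterm : ∀ j ∈ Finset.range (n + 1),
        (((Nat.card (HH j) : F) *
          (a.coeff (g ^ p ^ j) - if j = 0 then 0 else a.coeff (g ^ p ^ (j - 1)))) • hat F (HH j)).coeff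
            ((g ^ p ^ j₀) ^ (Fintype.card F) ^ k)
        = if j ≤ j₀ then (a.coeff (g ^ p ^ j) - if j = 0 then 0 else a.coeff (g ^ p ^ (j - 1))) else 0 := by
      intro j hjr
      have hjn' : j ≤ n := by simpa using Nat.lt_succ_iff.mp (Finset.mem_range.mp hjr)
      rw [MonoidAlgebra.coeff_smul_apply, hat_apply, smul_eq_mul]
      have hmem' : ((g ^ p ^ j₀) ^ (Fintype.card F) ^ k ∈ HH j) ↔ j ≤ j₀ := by
        rw [hqkmem, hmem j₀ hj₀ j hjn']
      by_cases hcase : j ≤ j₀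
      · rw [if_pos hcase, if_pos (hmem'.mpr hcase), mul_one,
          mul_comm ((Nat.card (HH j) : F)) _, mul_assoc,
          mul_inv_cancel₀ (hcardHF j hjn'), mul_one]
      · rw [if_neg hcase, if_neg (fun hm => hcase (hmem'.mp hm)), mul_zero, mul_zero]
    rw [Finset.sum_congr rfl hterm]
    have hfilter : ∑ j ∈ Finset.range (n + 1),
        (if j ≤ j₀ then (a.coeff (g ^ p ^ j) - if j = 0 then (0:F) else a.coeff (g ^ p ^ (j - 1))) else 0)
        = ∑ j ∈ Finset.range (j₀ + 1),
          (a.coeff (g ^ p ^ j) - if j = 0 then (0:F) else a.coeff (g ^ p ^ (j - 1))) := by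
      rw [← Finset.sum_filter]
      congr 1
      ext j
      simp only [Finset.mem_filter, Finset.mem_range]
      omega
    rw [hfilter, htel j₀]
  -- spanning by the e's
  have hspanE : ∀ a : MonoidAlgebra F G, a * a = a →
      ∃ d : ℕ → F, a = ∑ l ∈ Finset.range (n + 1), d l • e l := by
    intro a ha
    obtain ⟨c, hc⟩ := hspan a ha
    refine ⟨fun l => ∑ j ∈ Finset.range (n + 1), if l ≤ j then c j else 0, ?_⟩
    rw [hc]
    have h1 : ∀ j ∈ Finset.range (n + 1), c j • hat F (HH j)
        = ∑ l ∈ Finset.range (n + 1), if l ≤ j then c j • e l else 0 := by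
      intro j hj
      have hjn' : j ≤ n := Nat.lt_succ_iff.mp (Finset.mem_range.mp hj)
      rw [← hsum' j hjn', Finset.smul_sum, ← Finset.sum_filter]
      congr 1
      ext l
      simp only [Finset.mem_filter, Finset.mem_range]
      omega
    rw [Finset.sum_congr rfl h1, Finset.sum_comm]
    refine Finset.sum_congr rfl (fun l hl => ?_)
    rw [Finset.sum_smul]
    refine Finset.sum_congr rfl (fun j hj => ?_)
    split_ifs with h
    · rfl
    · rw [zero_smul]
  -- primitivity
  have hprim : ∀ i, i ≤ n → IsPrimIdem (e i) := by
    intro i hi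
    refine ⟨hene i hi, by simpa using hee i hi i hi, ?_⟩
    intro A B hA hB hAB hBA hesum
    obtain ⟨c, hc⟩ := hspanE A hA
    obtain ⟨d, hd⟩ := hspanE B hB
    have hmul : ∀ (c' : ℕ → F), (∑ l ∈ Finset.range (n + 1), c' l • e l) * e i = c' i • e i := by
      intro c'
      rw [Finset.sum_mul]
      rw [Finset.sum_eq_single i]
      · rw [smul_mul_assoc, hee i hi i hi, if_pos rfl]
      · intro j hj hne
        rw [smul_mul_assoc, hee j (Nat.lt_succ_iff.mp (Finset.mem_range.mp hj)) i hi,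
          if_neg hne, smul_zero]
      · intro hni
        exact absurd (Finset.mem_range.mpr (by omega)) hni
    have hA' : A = c i • e i := by
      have h2 : A * (A + B) = A := by rw [mul_add, hA, hAB, add_zero]
      rw [← hesum] at h2
      rw [← h2, hc, hmul]
    have hB' : B = d i • e i := by
      have h2 : B * (A + B) = B := by rw [mul_add, hBA, hB, zero_add]
      rw [← hesum] at h2
      rw [← h2, hd, hmul]
    have hzero : (c i * d i) • e i = 0 := by
      have h3 : (c i • e i) * (d i • e i) = (c i * d i) • e i := by
        rw [smul_mul_smul_comm, hee i hi i hi, if_pos rfl]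
      rw [← h3, ← hA', ← hB', hAB]
    rcases smul_eq_zero.mp hzero with h | h
    · rcases mul_eq_zero.mp h with h' | h'
      · left; rw [hA', h', zero_smul]
      · right; rw [hB', h', zero_smul]
    · exact absurd h (hene i hi)
  refine ⟨fun i hi => hprim i hi, fun i hi j hj hne => ?_, ?_⟩
  · rw [hee i hi j hj, if_neg hne]
  · rw [hsum' n le_rfl, hHn, hat_bot]
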